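/- arXiv:2103.17214 — 3 statements merged into one kernel-verified Lean document; each statement's English description precedes it below -/
import Mathlib

section
/- Let X ⊆ ℂⁿ be compact and rationally convex, let p ∈ X̂ \ X, and suppose Ȟ¹(X; ℤ) = 0 (equivalently, every nonvanishing continuous function on X has a continuous logarithm). If X has the property that every polynomial with a continuous logarithm on X is nonvanishing on X̂, then p ∈ X, a contradiction; hence X is polynomially convex. -/
open Filter Metric MeasureTheory Topology

noncomputable def ev {n : ℕ} (P : MvPolynomial (Fin n) ℂ) (z : EuclideanSpace ℂ (Fin n)) : ℂ :=
  MvPolynomial.eval (fun i => z i) P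

def polyHull {n : ℕ} (K : Set (EuclideanSpace ℂ (Fin n))) : Set (EuclideanSpace ℂ (Fin n)) :=
  {z | ∀ P : MvPolynomial (Fin n) ℂ, ‖ev P z‖ ≤ sSup ((fun w => ‖ev P w‖) '' K)}

/-- `P` admits a continuous logarithm on `K`. -/
def HasContLog {n : ℕ} (P : MvPolynomial (Fin n) ℂ) (K : Set (EuclideanSpace ℂ (Fin n))) : Prop :=
  ∃ g : EuclideanSpace ℂ (Fin n) → ℂ, ContinuousOn g K ∧ ∀ z ∈ K, ev P z = Complex.exp (g z)

/-- `K` satisfies Stolzenberg's generalized argument principle. -/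
def GenArgPrinciple {n : ℕ} (K : Set (EuclideanSpace ℂ (Fin n))) : Prop :=
  ∀ P : MvPolynomial (Fin n) ℂ, HasContLog P K → ∀ z ∈ polyHull K, ev P z ≠ 0

/-- `X` is rationally convex. -/
def RatConvex {n : ℕ} (X : Set (EuclideanSpace ℂ (Fin n))) : Prop :=
  ∀ z ∉ X, ∃ P : MvPolynomial (Fin n) ℂ, ev P z = 0 ∧ ∀ w ∈ X, ev P w ≠ 0

theorem polynomially_convex_of_ratConvex_GAP (n : ℕ)
    (X : Set (EuclideanSpace ℂ (Fin n))) (hX : IsCompact X)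
    (hrat : RatConvex X)
    (hH1 : ∀ f : EuclideanSpace ℂ (Fin n) → ℂ, ContinuousOn f X → (∀ z ∈ X, f z ≠ 0) →
      ∃ g : EuclideanSpace ℂ (Fin n) → ℂ, ContinuousOn g X ∧ ∀ z ∈ X, f z = Complex.exp (g z))
    (hgap : GenArgPrinciple X) :
    polyHull X = X := by
  apply Set.eq_of_subset_of_subset
  · intro z hz
    by_contra hzX
    obtain ⟨P, hPz, hPX⟩ := hrat z hzX
    have hcont : ContinuousOn (ev P) X := by
      apply Continuous.continuousOn
      unfold ev
      exact P.continuous_eval.comp (continuous_pi fun i => (continuous_apply i).comp (PiLp.continuous_ofLp 2 _))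
    obtain ⟨g, hg, hgeq⟩ := hH1 (ev P) hcont hPX
    exact hgap P ⟨g, hg, hgeq⟩ z hz hPz
  · intro z hz P
    have hcont : Continuous (fun w => ‖ev P w‖) := by
      unfold ev
      exact (P.continuous_eval.comp (continuous_pi fun i => (continuous_apply i).comp (PiLp.continuous_ofLp 2 _))).norm
    exact le_csSup ((hX.image hcont).bddAbove) ⟨z, hz, rfl⟩
end

section
/- Let Y ⊆ ℂⁿ be compact and rationally convex, and let Γ ⊆ ℂⁿ have zero two-dimensional Hausdorff measure with K = Y ∪ Γ compact. Then K is rationally convex. -/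
open Filter Metric MeasureTheory Topology
open scoped NNReal ENNReal

set_option maxHeartbeats 1000000

lemma coord_le {n : ℕ} (x : EuclideanSpace ℂ (Fin n)) (i : Fin n) : ‖x i‖ ≤ ‖x‖ := by
  rw [EuclideanSpace.norm_eq]
  rw [show ‖x i‖ = Real.sqrt (‖x i‖ ^ 2) from (Real.sqrt_sq (norm_nonneg _)).symm]
  apply Real.sqrt_le_sqrt
  exact Finset.single_le_sum (f := fun j => ‖x j‖ ^ 2) (fun j _ => sq_nonneg _) (Finset.mem_univ i)

lemma ev_cont {n : ℕ} (P : MvPolynomial (Fin n) ℂ) : Continuous (ev P) := by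
  induction P using MvPolynomial.induction_on with
  | C a =>
      have : ev (MvPolynomial.C a) = fun _ : EuclideanSpace ℂ (Fin n) => a := by
        funext z; simp [ev]
      rw [this]; exact continuous_const
  | add p q hp hq =>
      have : ev (p + q) = fun z => ev p z + ev q z := by funext z; simp [ev]
      rw [this]; exact hp.add hq
  | mul_X p i hp =>
      have : ev (p * MvPolynomial.X i) = fun z => ev p z * z i := by
        funext z; simp [ev]
      rw [this]
      exact hp.mul (EuclideanSpace.proj i).continuous

lemma ev_lip {n : ℕ} (P : MvPolynomial (Fin n) ℂ) (R : ℝ) (hR : 0 ≤ R) :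
    ∃ L : ℝ, 0 ≤ L ∧ ∀ x ∈ closedBall (0 : EuclideanSpace ℂ (Fin n)) R,
      ∀ y ∈ closedBall (0 : EuclideanSpace ℂ (Fin n)) R,
        dist (ev P x) (ev P y) ≤ L * dist x y := by
  induction P using MvPolynomial.induction_on with
  | C a =>
      exact ⟨0, le_refl _, fun x _ y _ => by
        have : ev (MvPolynomial.C a) x = ev (MvPolynomial.C a) y := by simp [ev]
        simp [this]⟩
  | add p q hp hq =>
      obtain ⟨Lp, hLp, Hp⟩ := hp
      obtain ⟨Lq, hLq, Hq⟩ := hq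
      refine ⟨Lp + Lq, by positivity, fun x hx y hy => ?_⟩
      have : ∀ w, ev (p + q) w = ev p w + ev q w := fun w => by simp [ev]
      rw [this, this]
      calc dist (ev p x + ev q x) (ev p y + ev q y)
          ≤ dist (ev p x) (ev p y) + dist (ev q x) (ev q y) := dist_add_add_le _ _ _ _
        _ ≤ Lp * dist x y + Lq * dist x y := add_le_add (Hp x hx y hy) (Hq x hx y hy)
        _ = (Lp + Lq) * dist x y := by ring
  | mul_X p i hp =>
      obtain ⟨Lp, hLp, Hp⟩ := hp
      obtain ⟨A, hA⟩ := (isCompact_closedBall (0 : EuclideanSpace ℂ (Fin n)) R).exists_bound_of_continuousOn (ev_cont p).continuousOn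
      have hA0 : 0 ≤ A := le_trans (norm_nonneg _) (hA 0 (mem_closedBall_self hR))
      refine ⟨A + R * Lp, by positivity, fun x hx y hy => ?_⟩
      have hev : ∀ w, ev (p * MvPolynomial.X i) w = ev p w * w i := fun w => by simp [ev]
      rw [hev, hev, dist_eq_norm]
      have key : ev p x * x i - ev p y * y i
          = ev p x * (x i - y i) + (ev p x - ev p y) * y i := by ring
      rw [key]
      have h1 : ‖x i - y i‖ ≤ dist x y := by
        have := coord_le (x - y) i
        simpa [dist_eq_norm] using this
      have h2 : ‖y i‖ ≤ R := le_trans (coord_le y i) (by simpa using hy)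
      calc ‖ev p x * (x i - y i) + (ev p x - ev p y) * y i‖
          ≤ ‖ev p x * (x i - y i)‖ + ‖(ev p x - ev p y) * y i‖ := norm_add_le _ _
        _ = ‖ev p x‖ * ‖x i - y i‖ + ‖ev p x - ev p y‖ * ‖y i‖ := by rw [norm_mul, norm_mul]
        _ ≤ A * dist x y + (Lp * dist x y) * R := by
            refine add_le_add (mul_le_mul (hA x hx) h1 (norm_nonneg _) hA0) ?_
            refine mul_le_mul ?_ h2 (norm_nonneg _) (by positivity)
            simpa [dist_eq_norm] using Hp x hx y hy
        _ = (A + R * Lp) * dist x y := by ring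

lemma complex_ball_pos (r : ℝ) (hr : 0 < r) : 0 < μH[2] (closedBall (0 : ℂ) r) := by
  set g : ℂ → ℝ × ℝ := fun w => (w.re, w.im) with hg
  have hlip : LipschitzWith 1 g := by
    refine LipschitzWith.of_dist_le_mul fun x y => ?_
    rw [Prod.dist_eq]
    rw [show ((1 : ℝ≥0) : ℝ) * dist x y = dist x y by norm_num]
    refine max_le ?_ ?_
    · rw [Real.dist_eq, ← Complex.sub_re, Complex.dist_eq]
      exact Complex.abs_re_le_norm _
    · rw [Real.dist_eq, ← Complex.sub_im, Complex.dist_eq]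
      exact Complex.abs_im_le_norm _
  have hsub : closedBall ((0 : ℝ), (0 : ℝ)) (r / 2) ⊆ g '' closedBall (0 : ℂ) r := by
    rintro ⟨a, b⟩ hp
    rw [mem_closedBall, Prod.dist_eq] at hp
    have ha : |a| ≤ r / 2 := by simpa [Real.dist_eq] using le_trans (le_max_left _ _) hp
    have hb : |b| ≤ r / 2 := by simpa [Real.dist_eq] using le_trans (le_max_right _ _) hp
    refine ⟨⟨a, b⟩, ?_, by simp [g]⟩
    rw [mem_closedBall, Complex.dist_eq]
    calc ‖(⟨a, b⟩ : ℂ) - 0‖ ≤ |a| + |b| := by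
          simpa using Complex.norm_le_abs_re_add_abs_im (⟨a, b⟩ : ℂ)
      _ ≤ r / 2 + r / 2 := add_le_add ha hb
      _ = r := by ring
  have h1 : (0 : ℝ≥0∞) < μH[2] (closedBall ((0 : ℝ), (0 : ℝ)) (r / 2)) := by
    rw [MeasureTheory.hausdorffMeasure_prod_real]
    exact measure_closedBall_pos _ _ (by linarith)
  have h2 : μH[2] (closedBall ((0 : ℝ), (0 : ℝ)) (r / 2)) ≤ μH[2] (g '' closedBall (0 : ℂ) r) :=
    measure_mono hsub
  have h3 := hlip.hausdorffMeasure_image_le (by norm_num : (0:ℝ) ≤ 2) (closedBall (0 : ℂ) r)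
  calc (0 : ℝ≥0∞) < μH[2] (closedBall ((0 : ℝ), (0 : ℝ)) (r / 2)) := h1
    _ ≤ μH[2] (g '' closedBall (0 : ℂ) r) := h2
    _ ≤ (1 : ℝ≥0∞) ^ (2:ℝ) * μH[2] (closedBall (0 : ℂ) r) := by simpa using h3
    _ = μH[2] (closedBall (0 : ℂ) r) := by simp

lemma ev_shift {n : ℕ} (P : MvPolynomial (Fin n) ℂ) (c : Fin n → ℂ)
    (z w : EuclideanSpace ℂ (Fin n)) :
    ev (P + ∑ i, MvPolynomial.C (c i) * (MvPolynomial.X i - MvPolynomial.C (z i))) w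
      = ev P w + ∑ i, c i * (w i - z i) := by
  simp [ev, map_sum]

lemma main_claim {n : ℕ} [m : MeasurableSpace (EuclideanSpace ℂ (Fin n))]
    [BorelSpace (EuclideanSpace ℂ (Fin n))]
    (Y Γ : Set (EuclideanSpace ℂ (Fin n)))
    (hΓ : μH[2] Γ = 0) (hK : IsCompact (Y ∪ Γ))
    (z : EuclideanSpace ℂ (Fin n)) (P : MvPolynomial (Fin n) ℂ)
    (R₀ : ℝ) (hR₀ : 0 ≤ R₀) (hKR : Y ∪ Γ ⊆ closedBall 0 R₀)
    (δ : ℝ) (hδ : 0 < δ) (hPY : ∀ w ∈ Y, δ ≤ ‖ev P w‖)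
    (d : ℝ) (hd : 0 < d) (hdK : ∀ w ∈ Y ∪ Γ, d ≤ dist w z) :
    ∃ (c : Fin n → ℂ) (α : ℝ), 0 < α ∧
      ∀ w ∈ Y ∪ Γ, α ≤ ‖ev P w + ∑ i, c i * (w i - z i)‖ := by
  set D : ℝ := R₀ + ‖z‖ + 1 with hD
  have hD0 : 0 < D := by positivity
  have hDbound : ∀ w ∈ closedBall (0 : EuclideanSpace ℂ (Fin n)) R₀, ∀ i : Fin n, ‖w i - z i‖ ≤ D := by
    intro w hw i
    have h1 : ‖w i - z i‖ ≤ ‖w - z‖ := by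
      have := coord_le (w - z) i
      simpa using this
    have h2 : ‖w - z‖ ≤ ‖w‖ + ‖z‖ := norm_sub_le _ _
    have h3 : ‖w‖ ≤ R₀ := by simpa using hw
    linarith
  set β : ℝ := d / (n + 1) with hβ
  have hβ0 : 0 < β := by positivity
  -- the inductive claim
  have claim : ∀ j : ℕ, j ≤ n → ∃ (c : Fin n → ℂ) (α : ℝ), 0 < α ∧
      (∀ i : Fin n, (i : ℕ) < n - j → c i = 0) ∧
      ∀ w, (w ∈ Y ∨ (w ∈ Γ ∧ ∀ i : Fin n, (i : ℕ) < n - j → ‖w i - z i‖ ≤ β)) →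
        α ≤ ‖ev P w + ∑ i, c i * (w i - z i)‖ := by
    intro j
    induction j with
    | zero =>
        intro _
        refine ⟨0, δ, hδ, fun i _ => rfl, fun w hw => ?_⟩
        rcases hw with hw | ⟨hwΓ, hsmall⟩
        · simpa using hPY w hw
        · exfalso
          have hwd : d ≤ dist w z := hdK w (Or.inr hwΓ)
          have hwn : dist w z = ‖w - z‖ := dist_eq_norm _ _
          have hsum : ‖w - z‖ ^ 2 = ∑ i, ‖w i - z i‖ ^ 2 := by
            rw [EuclideanSpace.norm_eq]
            rw [Real.sq_sqrt (Finset.sum_nonneg fun i _ => sq_nonneg _)]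
            refine Finset.sum_congr rfl fun i _ => ?_
            simp
          have hle : ∑ i, ‖w i - z i‖ ^ 2 ≤ n * β ^ 2 := by
            calc ∑ i, ‖w i - z i‖ ^ 2 ≤ ∑ _i : Fin n, β ^ 2 := by
                  refine Finset.sum_le_sum fun i _ => ?_
                  have := hsmall i (by omega)
                  nlinarith [norm_nonneg (w i - z i)]
              _ = n * β ^ 2 := by simp [mul_comm]
          have h1 : d ^ 2 ≤ n * β ^ 2 := by
            have : d ≤ ‖w - z‖ := by rw [← hwn]; exact hwd
            nlinarith [norm_nonneg (w - z)]
          have h2 : (n : ℝ) * β ^ 2 < d ^ 2 := by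
            have hn1 : (0:ℝ) < ((n : ℝ) + 1) ^ 2 := by positivity
            rw [hβ, div_pow, ← mul_div_assoc, div_lt_iff₀ hn1]
            nlinarith [sq_nonneg ((n:ℝ))]
          linarith
    | succ j ih =>
        intro hj1
        obtain ⟨c, α', hα', hcz, HIH⟩ := ih (by omega)
        set k : ℕ := n - (j + 1) with hk
        have hkn : k < n := by omega
        have hknj : n - j = k + 1 := by omega
        set i₀ : Fin n := ⟨k, hkn⟩ with hi₀
        -- the perturbed polynomial so far
        set Q' : MvPolynomial (Fin n) ℂ :=
          P + ∑ i, MvPolynomial.C (c i) * (MvPolynomial.X i - MvPolynomial.C (z i)) with hQ'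
        set g : EuclideanSpace ℂ (Fin n) → ℂ := fun w => ev P w + ∑ i, c i * (w i - z i) with hg
        have hgQ : ∀ w, g w = ev Q' w := fun w => (ev_shift P c z w).symm
        obtain ⟨L, hL0, hLip⟩ := ev_lip Q' R₀ hR₀
        obtain ⟨A, hA⟩ := (isCompact_closedBall (0 : EuclideanSpace ℂ (Fin n)) R₀).exists_bound_of_continuousOn
          (ev_cont Q').continuousOn
        have hA0 : 0 ≤ A := le_trans (norm_nonneg _) (hA 0 (mem_closedBall_self hR₀))
        set u : EuclideanSpace ℂ (Fin n) → ℂ := fun w => w i₀ - z i₀ with hu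
        set h : EuclideanSpace ℂ (Fin n) → ℂ := fun w => -(g w) / u w with hh
        set W : Set (EuclideanSpace ℂ (Fin n)) := closedBall (0 : EuclideanSpace ℂ (Fin n)) R₀ ∩ {w | β ≤ ‖u w‖} with hW
        have hWclosed : IsClosed W := by
          refine isClosed_closedBall.inter ?_
          have hc : Continuous fun w : EuclideanSpace ℂ (Fin n) => ‖u w‖ :=
            (((EuclideanSpace.proj i₀).continuous).sub continuous_const).norm
          exact isClosed_le continuous_const hc
        have hKWcompact : IsCompact ((Y ∪ Γ) ∩ W) := hK.inter_right hWclosed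
        have hu0 : ∀ w ∈ W, u w ≠ 0 := by
          intro w hw
          have : β ≤ ‖u w‖ := hw.2
          intro h0
          rw [h0] at this
          simp at this
          linarith
        have hgcont : ContinuousOn g W := by
          have h1 : ContinuousOn (ev Q') W := (ev_cont Q').continuousOn
          exact h1.congr fun w _ => hgQ w
        have hconth : ContinuousOn h W := by
          refine ContinuousOn.div hgcont.neg ?_ hu0
          exact (((EuclideanSpace.proj i₀).continuous).sub continuous_const).continuousOn
        set T : Set ℂ := h '' ((Y ∪ Γ) ∩ W) with hT
        have hTcompact : IsCompact T := hKWcompact.image_of_continuousOn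
          (hconth.mono Set.inter_subset_right)
        -- h is Lipschitz on W
        have hhLip : ∀ x ∈ W, ∀ y ∈ W,
            dist (h x) (h y) ≤ ((A + L * D) / β ^ 2) * dist x y := by
          intro x hx y hy
          have hux : β ≤ ‖u x‖ := hx.2
          have huy : β ≤ ‖u y‖ := hy.2
          have huxD : ‖u x‖ ≤ D := hDbound x hx.1 i₀
          have huyD : ‖u y‖ ≤ D := hDbound y hy.1 i₀
          have hux0 : u x ≠ 0 := hu0 x hx
          have huy0 : u y ≠ 0 := hu0 y hy
          have key : h x - h y = (g y * u x - g x * u y) / (u x * u y) := by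
            rw [hh]
            field_simp
            ring
          have hnum : ‖g y * u x - g x * u y‖ ≤ (A + L * D) * dist x y := by
            have split : g y * u x - g x * u y = g y * (u x - u y) + (g y - g x) * u y := by ring
            rw [split]
            have h1 : ‖u x - u y‖ ≤ dist x y := by
              have := coord_le (x - y) i₀
              simpa [hu, dist_eq_norm, sub_sub_sub_comm] using this
            have h2 : ‖g y - g x‖ ≤ L * dist x y := by
              rw [hgQ, hgQ, ← dist_eq_norm]
              simpa [dist_comm] using hLip x hx.1 y hy.1
            have h3 : ‖g y‖ ≤ A := by rw [hgQ]; exact hA y hy.1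
            calc ‖g y * (u x - u y) + (g y - g x) * u y‖
                ≤ ‖g y‖ * ‖u x - u y‖ + ‖g y - g x‖ * ‖u y‖ := by
                  refine le_trans (norm_add_le _ _) ?_
                  rw [norm_mul, norm_mul]
              _ ≤ A * dist x y + (L * dist x y) * D := by
                  refine add_le_add (mul_le_mul h3 h1 (norm_nonneg _) hA0) ?_
                  exact mul_le_mul h2 huyD (norm_nonneg _) (by positivity)
              _ = (A + L * D) * dist x y := by ring
          have hposxy : (0:ℝ) < ‖u x‖ * ‖u y‖ :=
            mul_pos (lt_of_lt_of_le hβ0 hux) (lt_of_lt_of_le hβ0 huy)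
          rw [dist_eq_norm, key]
          rw [norm_div, norm_mul]
          rw [div_le_iff₀ hposxy]
          calc ‖g y * u x - g x * u y‖ ≤ (A + L * D) * dist x y := hnum
            _ = ((A + L * D)) * dist x y := rfl
            _ ≤ (A + L * D) / β ^ 2 * dist x y * (‖u x‖ * ‖u y‖) := by
                rw [div_mul_eq_mul_div, div_mul_eq_mul_div, le_div_iff₀ (by positivity)]
                have hb2 : β ^ 2 ≤ ‖u x‖ * ‖u y‖ := by nlinarith
                have hd0 : 0 ≤ (A + L * D) * dist x y := by positivity
                nlinarith
        -- image of Γ ∩ W is null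
        have hnull : μH[2] (h '' (Γ ∩ W)) = 0 := by
          have hlip : LipschitzOnWith ((A + L * D) / β ^ 2).toNNReal h W := by
            apply LipschitzOnWith.of_dist_le'
            exact hhLip
          have := (hlip.mono (Set.inter_subset_right : Γ ∩ W ⊆ W)).hausdorffMeasure_image_le
            (by norm_num : (0:ℝ) ≤ 2)
          refine le_antisymm (le_trans this ?_) zero_le
          have hμ : μH[2] (Γ ∩ W) = 0 :=
            le_antisymm (le_trans (measure_mono Set.inter_subset_left) hΓ.le) zero_le
          rw [hμ, mul_zero]
        set r₁ : ℝ := α' / (2 * D) with hr₁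
        have hr₁0 : 0 < r₁ := by positivity
        set T₂ : Set ℂ := T ∩ closedBall 0 (3 / 2 * r₁) with hT₂
        have hT₂compact : IsCompact T₂ := hTcompact.inter_right isClosed_closedBall
        have hYbig : ∀ w ∈ Y ∩ W, 2 * r₁ ≤ ‖h w‖ := by
          intro w hw
          have hgw : α' ≤ ‖g w‖ := HIH w (Or.inl hw.1)
          have huD : ‖u w‖ ≤ D := hDbound w hw.2.1 i₀
          have huβ : β ≤ ‖u w‖ := hw.2.2
          rw [hh]
          rw [norm_div, norm_neg]
          rw [le_div_iff₀ (by linarith)]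
          calc 2 * r₁ * ‖u w‖ ≤ 2 * r₁ * D := by nlinarith
            _ = α' := by rw [hr₁]; field_simp
            _ ≤ ‖g w‖ := hgw
        have hT₂sub : T₂ ⊆ h '' (Γ ∩ W) := by
          rintro v ⟨⟨w, hw, rfl⟩, hv2⟩
          rcases hw.1 with hwY | hwΓ
          · exfalso
            have h1 := hYbig w ⟨hwY, hw.2⟩
            have h2 : ‖h w‖ ≤ 3 / 2 * r₁ := by simpa using hv2
            linarith
          · exact ⟨w, ⟨hwΓ, hw.2⟩, rfl⟩
        have hT₂null : μH[2] T₂ = 0 :=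
          le_antisymm (le_trans (measure_mono hT₂sub) hnull.le) zero_le
        -- choose t
        have hex : ∃ t ∈ closedBall (0 : ℂ) r₁, t ∉ T₂ := by
          by_contra hcon
          push_neg at hcon
          have : closedBall (0 : ℂ) r₁ ⊆ T₂ := hcon
          have := measure_mono (μ := μH[2]) this
          rw [hT₂null] at this
          exact absurd (lt_of_lt_of_le (complex_ball_pos r₁ hr₁0) this) (by simp)
        obtain ⟨t, htball, htT₂⟩ := hex
        have htr₁ : ‖t‖ ≤ r₁ := by simpa using htball
        -- distance from t to T is bounded below
        obtain ⟨γ, hγ0, hγr, hγ⟩ : ∃ γ : ℝ, 0 < γ ∧ γ ≤ r₁ / 2 ∧ ∀ v ∈ T, γ ≤ dist t v := by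
          rcases T₂.eq_empty_or_nonempty with hTe | hTne
          · refine ⟨r₁ / 2, by linarith, le_refl _, fun v hv => ?_⟩
            have hvbig : ¬ v ∈ closedBall (0:ℂ) (3/2 * r₁) := by
              intro hmem
              have hvT₂ : v ∈ T₂ := ⟨hv, hmem⟩
              rw [hTe] at hvT₂
              exact hvT₂
            have : 3/2 * r₁ < ‖v‖ := by
              by_contra hvv
              exact hvbig (by simpa using le_of_not_gt hvv)
            calc r₁ / 2 ≤ ‖v‖ - ‖t‖ := by linarith
              _ ≤ ‖v - t‖ := by
                  have := norm_sub_norm_le v t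
                  linarith
              _ = dist t v := by rw [dist_comm, dist_eq_norm]
          · have hpos : 0 < infDist t T₂ :=
              (hT₂compact.isClosed.notMem_iff_infDist_pos hTne).mp htT₂
            refine ⟨min (infDist t T₂) (r₁ / 2), lt_min hpos (by linarith), min_le_right _ _,
              fun v hv => ?_⟩
            by_cases hvb : v ∈ closedBall (0:ℂ) (3/2 * r₁)
            · have hvT₂ : v ∈ T₂ := ⟨hv, hvb⟩
              exact le_trans (min_le_left _ _) (infDist_le_dist_of_mem hvT₂)
            · have : 3/2 * r₁ < ‖v‖ := by
                by_contra hvv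
                exact hvb (by simpa using le_of_not_gt hvv)
              refine le_trans (min_le_right _ _) ?_
              calc r₁ / 2 ≤ ‖v‖ - ‖t‖ := by linarith
                _ ≤ ‖v - t‖ := by
                    have := norm_sub_norm_le v t
                    linarith
                _ = dist t v := by rw [dist_comm, dist_eq_norm]
        -- the new coefficient vector
        set c' : Fin n → ℂ := Function.update c i₀ t with hc'
        have hvali₀ : (i₀ : ℕ) = k := rfl
        have hci₀ : c i₀ = 0 := hcz i₀ (by omega)
        have hsum : ∀ w : EuclideanSpace ℂ (Fin n), ∑ i, c' i * (w i - z i)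
            = (∑ i, c i * (w i - z i)) + t * u w := by
          intro w
          have h1 : ∑ i ∈ Finset.univ.erase i₀, c' i * (w i - z i)
              = ∑ i ∈ Finset.univ.erase i₀, c i * (w i - z i) := by
            refine Finset.sum_congr rfl fun i hi => ?_
            have : i ≠ i₀ := Finset.ne_of_mem_erase hi
            rw [hc', Function.update_of_ne this]
          have h2 := Finset.sum_erase_add Finset.univ (fun i => c' i * (w i - z i))
            (Finset.mem_univ i₀)
          have h3 := Finset.sum_erase_add Finset.univ (fun i => c i * (w i - z i))
            (Finset.mem_univ i₀)
          have hc'i₀ : c' i₀ = t := by rw [hc', Function.update_self]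
          calc ∑ i, c' i * (w i - z i)
              = (∑ i ∈ Finset.univ.erase i₀, c' i * (w i - z i)) + c' i₀ * (w i₀ - z i₀) :=
                h2.symm
            _ = (∑ i ∈ Finset.univ.erase i₀, c i * (w i - z i)) + t * u w := by
                rw [h1, hc'i₀, hu]
            _ = (∑ i, c i * (w i - z i)) + t * u w := by
                have h4 : ∑ i ∈ Finset.univ.erase i₀, c i * (w i - z i)
                    = ∑ i, c i * (w i - z i) := by
                  simpa [hci₀] using h3
                rw [h4]
        refine ⟨c', min (α' / 2) (β * γ), lt_min (by linarith) (by positivity), ?_, ?_⟩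
        · intro i hi
          have hii : (i : ℕ) < k := by omega
          have : i ≠ i₀ := by
            intro he
            rw [he, hvali₀] at hii
            omega
          rw [hc', Function.update_of_ne this]
          exact hcz i (by omega)
        · intro w hw
          have hwK : w ∈ Y ∪ Γ := by
            rcases hw with hw | hw
            · exact Or.inl hw
            · exact Or.inr hw.1
          have hwball : w ∈ closedBall (0 : EuclideanSpace ℂ (Fin n)) R₀ := hKR hwK
          have huwD : ‖u w‖ ≤ D := hDbound w hwball i₀
          rw [show ev P w + ∑ i, c' i * (w i - z i) = g w + t * u w by
            rw [hsum w, hg]; ring]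
          by_cases hub : ‖u w‖ ≤ β
          · -- small u case: use IH
            have hIH : α' ≤ ‖g w‖ := by
              refine HIH w ?_
              rcases hw with hwY | ⟨hwΓ, hsmall⟩
              · exact Or.inl hwY
              · refine Or.inr ⟨hwΓ, fun i hi => ?_⟩
                rw [hknj] at hi
                by_cases hik : (i : ℕ) < k
                · exact hsmall i hik
                · have : i = i₀ := by
                    apply Fin.ext
                    simp only [hi₀]
                    omega
                  rw [this]
                  exact hub
            have htu : ‖t * u w‖ ≤ α' / 2 := by
              rw [norm_mul]
              calc ‖t‖ * ‖u w‖ ≤ r₁ * D := by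
                    refine mul_le_mul htr₁ huwD (norm_nonneg _) (le_of_lt hr₁0)
                _ = α' / 2 := by rw [hr₁, div_mul_eq_mul_div, mul_comm 2 D, ← div_div, mul_div_assoc, div_self hD0.ne', mul_one]
            refine le_trans (min_le_left _ _) ?_
            calc α' / 2 = α' - α' / 2 := by ring
              _ ≤ ‖g w‖ - ‖t * u w‖ := by
                  refine sub_le_sub hIH htu
              _ ≤ ‖g w + t * u w‖ := by
                  have := norm_add_le (g w + t * u w) (-(t * u w))
                  simp only [add_neg_cancel_right] at this
                  have h2 : ‖-(t * u w)‖ = ‖t * u w‖ := norm_neg _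
                  linarith
          · -- big u case
            push_neg at hub
            have hwW : w ∈ W := ⟨hwball, le_of_lt hub⟩
            have hhwT : h w ∈ T := ⟨w, ⟨hwK, hwW⟩, rfl⟩
            have hγw : γ ≤ ‖t - h w‖ := by
              have := hγ _ hhwT
              rwa [dist_eq_norm] at this
            have hu0w : u w ≠ 0 := hu0 w hwW
            have key : g w + t * u w = u w * (t - h w) := by
              rw [hh]
              field_simp
              ring
            rw [key, norm_mul]
            refine le_trans (min_le_right _ _) ?_
            exact mul_le_mul (le_of_lt hub) hγw hγ0.le (norm_nonneg _)
  obtain ⟨c, α, hα, _, H⟩ := claim n (le_refl n)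
  refine ⟨c, α, hα, fun w hw => ?_⟩
  refine H w ?_
  rcases hw with hw | hw
  · exact Or.inl hw
  · exact Or.inr ⟨hw, fun i hi => by omega⟩

theorem ratConvex_union_of_zero_area (n : ℕ)
    [m : MeasurableSpace (EuclideanSpace ℂ (Fin n))]
    [BorelSpace (EuclideanSpace ℂ (Fin n))]
    (Y Γ : Set (EuclideanSpace ℂ (Fin n)))
    (hY : IsCompact Y) (hrat : RatConvex Y)
    (hΓ : μH[2] Γ = 0) (hK : IsCompact (Y ∪ Γ)) :
    RatConvex (Y ∪ Γ) := by
  intro z hz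
  have hzY : z ∉ Y := fun h => hz (Or.inl h)
  obtain ⟨P, hPz, hPY0⟩ := hrat z hzY
  obtain ⟨δ, hδ0, hδ⟩ : ∃ δ : ℝ, 0 < δ ∧ ∀ w ∈ Y, δ ≤ ‖ev P w‖ := by
    rcases Y.eq_empty_or_nonempty with hYe | hYne
    · exact ⟨1, one_pos, fun w hw => by rw [hYe] at hw; simp at hw⟩
    · obtain ⟨w₀, hw₀, hmin⟩ := hY.exists_isMinOn hYne (ev_cont P).norm.continuousOn
      refine ⟨‖ev P w₀‖, ?_, fun w hw => hmin hw⟩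
      rw [norm_pos_iff]
      exact hPY0 w₀ hw₀
  obtain ⟨R₀', hR₀'⟩ := hK.isBounded.subset_closedBall 0
  have hKR : Y ∪ Γ ⊆ closedBall 0 (max R₀' 0) :=
    hR₀'.trans (closedBall_subset_closedBall (le_max_left _ _))
  obtain ⟨d, hd0, hd⟩ : ∃ d : ℝ, 0 < d ∧ ∀ w ∈ Y ∪ Γ, d ≤ dist w z := by
    rcases (Y ∪ Γ).eq_empty_or_nonempty with hKe | hKne
    · exact ⟨1, one_pos, fun w hw => by rw [hKe] at hw; simp at hw⟩
    · have hpos : 0 < infDist z (Y ∪ Γ) :=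
        (hK.isClosed.notMem_iff_infDist_pos hKne).mp hz
      exact ⟨_, hpos, fun w hw => by rw [dist_comm]; exact infDist_le_dist_of_mem hw⟩
  obtain ⟨c, α, hα, H⟩ := main_claim Y Γ hΓ hK z P (max R₀' 0) (le_max_right _ _) hKR
    δ hδ0 hδ d hd0 hd
  refine ⟨P + ∑ i, MvPolynomial.C (c i) * (MvPolynomial.X i - MvPolynomial.C (z i)), ?_, ?_⟩
  · rw [ev_shift]
    simp [hPz]
  · intro w hw
    rw [ev_shift]
    intro h0
    have hH := H w hw
    rw [h0] at hH
    simp at hH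
    linarith
end

section
/- Carleman's approximation theorem: for every continuous function g : ℝ → ℂ and every positive continuous function ε : ℝ → (0,∞), there exists an entire function f on ℂ such that |f(x) - g(x)| < ε(x) for all x ∈ ℝ. -/
open Polynomial Complex Finset

lemma poly_eval_bound (p : Polynomial ℂ) : ∃ C : ℝ, 0 ≤ C ∧
    ∀ z : ℂ, ‖p.eval z‖ ≤ C * max 1 ‖z‖ ^ p.natDegree := by
  refine ⟨∑ i ∈ range (p.natDegree + 1), ‖p.coeff i‖,
    Finset.sum_nonneg fun i _ => norm_nonneg _, fun z => ?_⟩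
  have h1 : (1:ℝ) ≤ max 1 ‖z‖ := le_max_left _ _
  rw [Polynomial.eval_eq_sum_range, Finset.sum_mul]
  refine (norm_sum_le _ _).trans (Finset.sum_le_sum fun i hi => ?_)
  rw [norm_mul, norm_pow]
  refine mul_le_mul_of_nonneg_left ?_ (norm_nonneg _)
  calc ‖z‖ ^ i ≤ max 1 ‖z‖ ^ i := pow_le_pow_left₀ (norm_nonneg _) (le_max_right _ _) _
    _ ≤ max 1 ‖z‖ ^ p.natDegree := pow_le_pow_right₀ h1 (Nat.lt_succ_iff.mp (Finset.mem_range.mp hi))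

lemma poly_decay (p : Polynomial ℂ) (a b θ : ℝ) (ha : 0 < a) (hab : a < b) (hθ : 0 < θ)
    (C : ℝ) (hC0 : 0 ≤ C) (hC : ∀ z : ℂ, ‖p.eval z‖ ≤ C * max 1 ‖z‖ ^ p.natDegree) :
    ∃ m₀ : ℕ, 1 ≤ m₀ ∧ ∀ m : ℕ, m₀ ≤ m → ∀ x : ℝ, b ≤ |x| →
      ‖p.eval (x : ℂ)‖ * Real.exp (-((x / a) ^ (2 * m))) ≤ θ := by
  set k := p.natDegree with hk
  have hb : 0 < b := ha.trans hab
  set D : ℝ := C * max 1 b⁻¹ ^ k with hD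
  have hD0 : 0 ≤ D := mul_nonneg hC0 (pow_nonneg (le_trans zero_le_one (le_max_left _ _)) _)
  have hDb : ∀ x : ℝ, b ≤ |x| → ‖p.eval (x:ℂ)‖ ≤ D * |x| ^ k := by
    intro x hx
    have hx0 : 0 < |x| := lt_of_lt_of_le hb hx
    have hmax : max 1 ‖(x:ℂ)‖ ≤ max 1 b⁻¹ * |x| := by
      rw [Complex.norm_real, Real.norm_eq_abs]
      rcases le_total 1 |x| with h | h
      · rw [max_eq_right h]
        nlinarith [le_max_left (1:ℝ) b⁻¹]
      · rw [max_eq_left h]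
        calc (1:ℝ) = b⁻¹ * b := by field_simp
          _ ≤ max 1 b⁻¹ * |x| := by
            apply mul_le_mul (le_max_right _ _) hx hb.le
            exact le_trans zero_le_one (le_max_left _ _)
    calc ‖p.eval (x:ℂ)‖ ≤ C * max 1 ‖(x:ℂ)‖ ^ k := hC _
      _ ≤ C * (max 1 b⁻¹ * |x|) ^ k := by
          apply mul_le_mul_of_nonneg_left (pow_le_pow_left₀ ?_ hmax _) hC0
          positivity
      _ = D * |x| ^ k := by rw [hD, mul_pow]; ring
  set r : ℝ := (a / b) ^ (2 * (k + 1)) with hr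
  have hr0 : 0 < r := by positivity
  have hr1 : r < 1 := pow_lt_one₀ (by positivity) (by rw [div_lt_one hb]; exact hab) (by omega)
  set E : ℝ := D * (Nat.factorial (k + 1) : ℝ) * b ^ k with hE
  have htend : Filter.Tendsto (fun m : ℕ => E * r ^ m) Filter.atTop (nhds 0) := by
    simpa using (tendsto_pow_atTop_nhds_zero_of_lt_one hr0.le hr1).const_mul E
  obtain ⟨m₁, hm₁⟩ := Filter.eventually_atTop.mp (htend.eventually (gt_mem_nhds hθ))
  refine ⟨max 1 m₁, le_max_left _ _, fun m hm x hx => ?_⟩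
  have hm1 : 1 ≤ m := le_trans (le_max_left _ _) hm
  have hx0 : 0 < |x| := lt_of_lt_of_le hb hx
  set s := |x| with hs
  -- even power rewrite
  have hpow : (x / a) ^ (2 * m) = (s / a) ^ (2 * m) := by
    rw [pow_mul, pow_mul]
    congr 1
    rw [div_pow, div_pow, hs, _root_.sq_abs]
  set t : ℝ := (s / a) ^ (2 * m) with ht
  have ht0 : 0 < t := by positivity
  have hexp : Real.exp (-((x / a) ^ (2 * m))) ≤ (Nat.factorial (k+1) : ℝ) / t ^ (k + 1) := by
    rw [hpow, Real.exp_neg]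
    have h1 : t ^ (k+1) / (Nat.factorial (k+1) : ℝ) ≤ Real.exp t :=
      Real.pow_div_factorial_le_exp t ht0.le (k+1)
    have h2 : 0 < t ^ (k+1) / (Nat.factorial (k+1) : ℝ) := by positivity
    rw [inv_le_comm₀ (Real.exp_pos _) (by positivity)]
    calc (((Nat.factorial (k+1) : ℝ)) / t ^ (k + 1))⁻¹ = t ^ (k+1) / (Nat.factorial (k+1) : ℝ) := by
          rw [inv_div]
      _ ≤ Real.exp t := h1
  set M := 2 * m * (k + 1) with hM
  set j := M - k with hj
  have hMkj : M = k + j := by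
    have : k + 1 ≤ M := by
      calc k + 1 ≤ 2 * 1 * (k + 1) := by omega
        _ ≤ M := by rw [hM]; exact Nat.mul_le_mul_right _ (by omega)
    omega
  have htpow : t ^ (k + 1) = s ^ M / a ^ M := by
    rw [ht, ← pow_mul, div_pow, hM]
  have hsj : b ^ j ≤ s ^ j := pow_le_pow_left₀ hb.le hx _
  calc ‖p.eval (x:ℂ)‖ * Real.exp (-((x / a) ^ (2 * m)))
      ≤ (D * s ^ k) * ((Nat.factorial (k+1) : ℝ) / t ^ (k + 1)) :=
        mul_le_mul (hDb x hx) hexp (Real.exp_pos _).le (by positivity)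
    _ = D * (Nat.factorial (k+1) : ℝ) * a ^ M / s ^ j := by
        rw [htpow, hMkj, pow_add]
        field_simp
    _ ≤ D * (Nat.factorial (k+1) : ℝ) * a ^ M / b ^ j := by
        apply div_le_div_of_nonneg_left (by positivity) (by positivity) hsj
    _ = E * r ^ m := by
        rw [hE, hr, ← pow_mul]
        have : 2 * (k + 1) * m = M := by rw [hM]; ring
        rw [this, div_pow, hMkj, pow_add]
        field_simp
        ring
    _ ≤ θ := (hm₁ m (le_trans (le_max_right _ _) hm)).le

lemma cweier (G : ℝ → ℂ) (hG : Continuous G) (R θ : ℝ) (hθ : 0 < θ) :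
    ∃ p : Polynomial ℂ, ∀ x : ℝ, |x| ≤ R → ‖p.eval (x:ℂ) - G x‖ ≤ θ := by
  obtain ⟨p₁, hp₁⟩ := exists_polynomial_near_of_continuousOn (-R) R (fun x => (G x).re)
    ((Complex.continuous_re.comp hG).continuousOn) (θ/2) (by linarith)
  obtain ⟨p₂, hp₂⟩ := exists_polynomial_near_of_continuousOn (-R) R (fun x => (G x).im)
    ((Complex.continuous_im.comp hG).continuousOn) (θ/2) (by linarith)
  refine ⟨p₁.map (algebraMap ℝ ℂ) + Polynomial.C Complex.I * p₂.map (algebraMap ℝ ℂ),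
    fun x hx => ?_⟩
  have hx' : x ∈ Set.Icc (-R) R := by
    rcases abs_le.mp hx with ⟨h1, h2⟩; exact ⟨h1, h2⟩
  have e1 : ∀ q : Polynomial ℝ, (q.map (algebraMap ℝ ℂ)).eval (x:ℂ) = ((q.eval x : ℝ) : ℂ) := by
    intro q
    rw [Polynomial.eval_map]
    exact Polynomial.eval₂_at_apply _ _
  have hGx : G x = ((G x).re : ℂ) + ((G x).im : ℂ) * Complex.I := (Complex.re_add_im _).symm
  rw [Polynomial.eval_add, Polynomial.eval_mul, Polynomial.eval_C, e1, e1, hGx]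
  have : ((p₁.eval x : ℝ) : ℂ) + Complex.I * ((p₂.eval x : ℝ) : ℂ) -
      (((G x).re : ℂ) + ((G x).im : ℂ) * Complex.I)
      = (((p₁.eval x - (G x).re : ℝ)) : ℂ) + (((p₂.eval x - (G x).im : ℝ)) : ℂ) * Complex.I := by
    push_cast; ring
  rw [this]
  calc ‖(((p₁.eval x - (G x).re : ℝ)) : ℂ) + (((p₂.eval x - (G x).im : ℝ)) : ℂ) * Complex.I‖
      ≤ ‖(((p₁.eval x - (G x).re : ℝ)) : ℂ)‖ + ‖(((p₂.eval x - (G x).im : ℝ)) : ℂ) * Complex.I‖ :=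
        norm_add_le _ _
    _ ≤ θ/2 + θ/2 := by
        rw [norm_mul, Complex.norm_I, mul_one, Complex.norm_real, Complex.norm_real,
          Real.norm_eq_abs, Real.norm_eq_abs]
        exact add_le_add (hp₁ x hx').le (hp₂ x hx').le
    _ = θ := by ring

lemma approx_const (G : ℝ → ℂ) (hG : Continuous G) :
    ∃ F : ℂ → ℂ, Differentiable ℂ F ∧ ∀ x : ℝ, ‖F x - G x‖ < 1 := by
  -- the polynomials
  have hpex : ∀ n : ℕ, ∃ p : Polynomial ℂ, ∀ x : ℝ, |x| ≤ (n:ℝ)+1 →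
      ‖p.eval (x:ℂ) - G x‖ ≤ (1/8) * (1/2)^n :=
    fun n => cweier G hG ((n:ℝ)+1) _ (by positivity)
  choose p hp using hpex
  set d : ℕ → Polynomial ℂ := fun n => p (n+1) - p n with hd
  set a : ℕ → ℝ := fun n => (n:ℝ) + 1/2 with ha
  have ha0 : ∀ n, 0 < a n := fun n => by positivity
  -- bound on d on [-(n+1), n+1]
  have hdx : ∀ n : ℕ, ∀ x : ℝ, |x| ≤ (n:ℝ)+1 → ‖(d n).eval (x:ℂ)‖ ≤ (1/4) * (1/2)^n := by
    intro n x hx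
    have h1 := hp (n+1) x (by push_cast; linarith)
    have h2 := hp n x hx
    have : (d n).eval (x:ℂ) = ((p (n+1)).eval (x:ℂ) - G x) - ((p n).eval (x:ℂ) - G x) := by
      simp only [hd, Polynomial.eval_sub]; ring
    rw [this]
    calc ‖((p (n+1)).eval (x:ℂ) - G x) - ((p n).eval (x:ℂ) - G x)‖
        ≤ ‖(p (n+1)).eval (x:ℂ) - G x‖ + ‖(p n).eval (x:ℂ) - G x‖ := norm_sub_le _ _
      _ ≤ (1/8) * (1/2)^(n+1) + (1/8) * (1/2)^n := add_le_add h1 h2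
      _ ≤ (1/4) * (1/2)^n := by rw [pow_succ]; ring_nf; nlinarith [pow_pos (by norm_num : (0:ℝ) < 1/2) n]
  -- choose exponents m n
  have hmex : ∀ n : ℕ, ∃ m : ℕ, 1 ≤ m ∧
      (∀ x : ℝ, (n:ℝ)+1 ≤ |x| →
        ‖(d n).eval (x:ℂ)‖ * Real.exp (-((x / a n) ^ (2 * m))) ≤ (1/8) * (1/2)^n) ∧
      (∀ z : ℂ, ‖z‖ ≤ a n → ‖(d n).eval z‖ * (2 * (1/4)^m) ≤ (1/2)^n) := by
    intro n
    obtain ⟨C, hC0, hC⟩ := poly_eval_bound (d n)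
    obtain ⟨m₀, hm₀1, hm₀⟩ := poly_decay (d n) (a n) ((n:ℝ)+1) ((1/8) * (1/2)^n)
      (ha0 n) (by simp [ha]; norm_num) (by positivity) C hC0 hC
    set K : ℝ := C * max 1 (a n) ^ (d n).natDegree with hK
    have hK0 : 0 ≤ K := mul_nonneg hC0 (pow_nonneg (by positivity) _)
    have htnd : Filter.Tendsto (fun m : ℕ => K * (2 * (1/4:ℝ)^m)) Filter.atTop (nhds 0) := by
      have := (tendsto_pow_atTop_nhds_zero_of_lt_one (by norm_num : (0:ℝ) ≤ 1/4)
        (by norm_num)).const_mul (K * 2)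
      simpa [mul_assoc, mul_comm, mul_left_comm] using this
    obtain ⟨m₁, hm₁⟩ := Filter.eventually_atTop.mp
      (htnd.eventually (gt_mem_nhds (by positivity : (0:ℝ) < (1/2)^n)))
    refine ⟨max m₀ m₁, le_trans hm₀1 (le_max_left _ _),
      hm₀ _ (le_max_left _ _), fun z hz => ?_⟩
    have hzK : ‖(d n).eval z‖ ≤ K := by
      calc ‖(d n).eval z‖ ≤ C * max 1 ‖z‖ ^ (d n).natDegree := hC z
        _ ≤ K := by
            rw [hK]
            apply mul_le_mul_of_nonneg_left (pow_le_pow_left₀ (by positivity) ?_ _) hC0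
            exact max_le_max le_rfl hz
    calc ‖(d n).eval z‖ * (2 * (1/4)^(max m₀ m₁)) ≤ K * (2 * (1/4)^(max m₀ m₁)) := by
          apply mul_le_mul_of_nonneg_right hzK (by positivity)
      _ ≤ (1/2)^n := (hm₁ _ (le_max_right _ _)).le
  choose m hm1 hmii hmiv using hmex
  -- the cutoffs and terms
  set ω : ℕ → ℂ → ℂ := fun n z => 1 - Complex.exp (-((z / ((a n : ℝ):ℂ)) ^ (2 * m n))) with hω
  set u : ℕ → ℂ → ℂ := fun n z => (d n).eval z * ω n z with hu
  -- ω at real points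
  have hωreal : ∀ n : ℕ, ∀ x : ℝ,
      ω n (x:ℂ) = ((1 - Real.exp (-((x / a n) ^ (2 * m n))) : ℝ) : ℂ) := by
    intro n x
    rw [hω]
    push_cast
    ring_nf
  have htnonneg : ∀ n : ℕ, ∀ x : ℝ, 0 ≤ (x / a n) ^ (2 * m n) := by
    intro n x
    rw [pow_mul]
    positivity
  have hωle : ∀ n : ℕ, ∀ x : ℝ, ‖ω n (x:ℂ)‖ ≤ 1 := by
    intro n x
    rw [hωreal, Complex.norm_real, Real.norm_eq_abs, abs_le]
    have h1 : Real.exp (-((x / a n) ^ (2 * m n))) ≤ 1 :=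
      Real.exp_le_one_iff.mpr (neg_nonpos.mpr (htnonneg n x))
    have h2 : 0 < Real.exp (-((x / a n) ^ (2 * m n))) := Real.exp_pos _
    constructor <;> linarith
  -- disc bound
  have hudisc : ∀ n : ℕ, ∀ z : ℂ, ‖z‖ ≤ a n / 2 → ‖u n z‖ ≤ (1/2)^n := by
    intro n z hz
    have hwn : ‖-((z / ((a n : ℝ):ℂ)) ^ (2 * m n))‖ ≤ (1/4)^(m n) := by
      rw [norm_neg, norm_pow, norm_div, Complex.norm_real, Real.norm_eq_abs,
        abs_of_pos (ha0 n)]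
      calc (‖z‖ / a n) ^ (2 * m n) ≤ (1/2) ^ (2 * m n) := by
            apply pow_le_pow_left₀ (by positivity)
            rw [div_le_iff₀ (ha0 n)]
            linarith
        _ = (1/4)^(m n) := by rw [pow_mul]; norm_num
    have hw1 : ‖-((z / ((a n : ℝ):ℂ)) ^ (2 * m n))‖ ≤ 1 :=
      hwn.trans (pow_le_one₀ (by norm_num) (by norm_num))
    have hω2 : ‖ω n z‖ ≤ 2 * (1/4)^(m n) := by
      have h := Complex.norm_exp_sub_one_le (x := -((z / ((a n : ℝ):ℂ)) ^ (2 * m n)))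
        hw1
      simp only [hω]
      rw [← norm_neg, neg_sub]
      calc ‖Complex.exp (-((z / ((a n : ℝ):ℂ)) ^ (2 * m n))) - 1‖
          ≤ 2 * ‖-((z / ((a n : ℝ):ℂ)) ^ (2 * m n))‖ := h
        _ = 2 * ‖-((z / ((a n : ℝ):ℂ)) ^ (2 * m n))‖ := rfl
        _ ≤ 2 * (1/4)^(m n) := by linarith
    calc ‖u n z‖ = ‖(d n).eval z‖ * ‖ω n z‖ := norm_mul _ _
      _ ≤ ‖(d n).eval z‖ * (2 * (1/4)^(m n)) := by
          apply mul_le_mul_of_nonneg_left hω2 (norm_nonneg _)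
      _ ≤ (1/2)^n := hmiv n z (le_trans hz (half_le_self (ha0 n).le))
  -- real-axis bound for u with |x| ≤ n+1
  have hureal : ∀ n : ℕ, ∀ x : ℝ, |x| ≤ (n:ℝ)+1 → ‖u n (x:ℂ)‖ ≤ (1/4) * (1/2)^n := by
    intro n x hx
    calc ‖u n ↑x‖ = ‖(d n).eval (x:ℂ)‖ * ‖ω n ↑x‖ := norm_mul _ _
      _ ≤ ((1/4) * (1/2)^n) * 1 :=
          mul_le_mul (hdx n x hx) (hωle n x) (norm_nonneg _) (by positivity)
      _ = (1/4) * (1/2)^n := mul_one _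
  have hatop : Filter.Tendsto (fun n : ℕ => a n / 2) Filter.atTop Filter.atTop := by
    apply Filter.Tendsto.atTop_div_const (by norm_num : (0:ℝ) < 2)
    simp only [ha]
    exact Filter.tendsto_atTop_add_const_right _ _ tendsto_natCast_atTop_atTop
  -- summability
  have hsum : ∀ z : ℂ, Summable (fun n => u n z) := by
    intro z
    apply Summable.of_norm_bounded_eventually_nat (g := fun n => (1/2:ℝ)^n)
      (summable_geometric_of_lt_one (by norm_num) (by norm_num))
    exact (hatop.eventually_ge_atTop ‖z‖).mono fun n hn => hudisc n z hn
  -- the entire function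
  set F : ℂ → ℂ := fun z => (p 0).eval z + ∑' n, u n z with hF
  have hudiff : ∀ n : ℕ, Differentiable ℂ (u n) := by
    intro n
    simp only [hu, hω]
    apply ((d n).differentiable).mul
    apply (differentiable_const _).sub
    apply Complex.differentiable_exp.comp
    exact (((differentiable_id.div_const _).pow _)).neg
  have hFdiff : Differentiable ℂ F := by
    intro z₀
    set R : ℝ := ‖z₀‖ + 1 with hR
    have hR0 : 0 < R := by positivity
    set N : ℕ := ⌈2 * R⌉₊ with hN
    have hNR : 2 * R ≤ (N : ℝ) := Nat.le_ceil _
    have hball : ∀ w : ℂ, w ∈ Metric.ball (0:ℂ) R → ∀ k : ℕ, ‖w‖ ≤ a (k + N) / 2 := by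
      intro w hw k
      rw [mem_ball_zero_iff] at hw
      have : (N : ℝ) ≤ (k + N : ℕ) := by push_cast; linarith [Nat.cast_nonneg (α := ℝ) k]
      calc ‖w‖ ≤ R := hw.le
        _ ≤ (N : ℝ) / 2 := by linarith
        _ ≤ a (k + N) / 2 := by
            apply div_le_div_of_nonneg_right ?_ (by norm_num)
            simp only [ha]
            push_cast
            linarith [Nat.cast_nonneg (α := ℝ) k]
    have htail : DifferentiableOn ℂ (fun w => ∑' k, u (k + N) w) (Metric.ball (0:ℂ) R) := by
      apply differentiableOn_tsum_of_summable_norm (u := fun k => (1/2:ℝ)^(k + N))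
      · apply Summable.comp_injective
          (summable_geometric_of_lt_one (by norm_num) (by norm_num : (1/2:ℝ) < 1))
        exact fun i j h => by omega
      · exact fun k => (hudiff (k + N)).differentiableOn
      · exact Metric.isOpen_ball
      · exact fun k w hw => hudisc (k + N) w (hball w hw k)
    have hGdiff : DifferentiableOn ℂ
        (fun w => ((p 0).eval w + ∑ n ∈ range N, u n w) + ∑' k, u (k + N) w)
        (Metric.ball (0:ℂ) R) := by
      apply DifferentiableOn.add ?_ htail
      apply Differentiable.differentiableOn
      exact ((p 0).differentiable).add (Differentiable.fun_sum fun n _ => hudiff n)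
    have hcongr : DifferentiableOn ℂ F (Metric.ball (0:ℂ) R) := by
      apply hGdiff.congr
      intro w hw
      rw [hF]
      have := Summable.sum_add_tsum_nat_add (f := fun n => u n w) N (hsum w)
      simp only []
      rw [← this]
      ring
    exact hcongr.differentiableAt (Metric.isOpen_ball.mem_nhds (by
      rw [mem_ball_zero_iff]; linarith))
  refine ⟨F, hFdiff, fun x => ?_⟩
  -- choose N
  set N : ℕ := ⌈|x| - 1⌉₊ with hN
  have hxN1 : |x| ≤ (N:ℝ) + 1 := by
    have := Nat.le_ceil (|x| - 1)
    linarith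
  have hxlow : ∀ n : ℕ, n < N → (n:ℝ) + 1 ≤ |x| := by
    intro n hn
    have hNpos : 0 < N := Nat.pos_of_ne_zero (by omega)
    have h1 : 0 < |x| - 1 := by
      by_contra h
      push_neg at h
      have : N = 0 := by
        rw [hN, Nat.ceil_eq_zero]
        linarith
      omega
    have h2 : (N : ℝ) < (|x| - 1) + 1 := Nat.ceil_lt_add_one (by linarith)
    have h3 : (n:ℝ) + 1 ≤ (N : ℝ) := by exact_mod_cast hn
    linarith
  -- telescoping identity
  have htel : ∑ n ∈ range N, (d n).eval (x:ℂ) = (p N).eval (x:ℂ) - (p 0).eval (x:ℂ) := by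
    have := Finset.sum_range_sub (f := fun n => (p n).eval (x:ℂ)) N
    simp only [hd, Polynomial.eval_sub]
    exact this
  have hkey : F ↑x - G x = ((p N).eval (x:ℂ) - G x)
      + (∑ n ∈ range N, (u n ↑x - (d n).eval (x:ℂ)))
      + ∑' k, u (k + N) ↑x := by
    have hsplit := Summable.sum_add_tsum_nat_add (f := fun n => u n (x:ℂ)) N (hsum (x:ℂ))
    rw [hF]
    simp only []
    rw [← hsplit, Finset.sum_sub_distrib, htel]
    ring
  -- bound the three pieces
  have hb1 : ‖(p N).eval (x:ℂ) - G x‖ ≤ (1/8) * (1/2)^N := hp N x hxN1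
  have hb2 : ‖∑ n ∈ range N, (u n ↑x - (d n).eval (x:ℂ))‖ ≤ 1/4 := by
    calc ‖∑ n ∈ range N, (u n ↑x - (d n).eval (x:ℂ))‖
        ≤ ∑ n ∈ range N, ‖u n ↑x - (d n).eval (x:ℂ)‖ := norm_sum_le _ _
      _ ≤ ∑ n ∈ range N, (1/8) * (1/2)^n := by
          apply Finset.sum_le_sum
          intro n hn
          have hterm : u n ↑x - (d n).eval (x:ℂ)
              = -((d n).eval (x:ℂ) * ((Real.exp (-((x / a n) ^ (2 * m n))) : ℝ) : ℂ)) := by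
            simp only [hu]
            have h1 : ω n (x:ℂ) - 1 = -(((Real.exp (-((x / a n) ^ (2 * m n))) : ℝ) : ℂ)) := by
              rw [hωreal]
              push_cast
              ring
            calc (d n).eval (x:ℂ) * ω n ↑x - (d n).eval (x:ℂ)
                = (d n).eval (x:ℂ) * (ω n ↑x - 1) := by ring
              _ = -((d n).eval (x:ℂ) * ((Real.exp (-((x / a n) ^ (2 * m n))) : ℝ) : ℂ)) := by
                  rw [h1]; ring
          rw [hterm, norm_neg, norm_mul, Complex.norm_real, Real.norm_eq_abs,
            abs_of_pos (Real.exp_pos _)]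
          exact hmii n x (hxlow n (Finset.mem_range.mp hn))
      _ ≤ (1/8) * 2 := by
          rw [← Finset.mul_sum]
          apply mul_le_mul_of_nonneg_left ?_ (by norm_num)
          exact sum_geometric_two_le N
      _ = 1/4 := by norm_num
  have hb3 : ‖∑' k, u (k + N) ↑x‖ ≤ 1/2 := by
    have hterm : ∀ k : ℕ, ‖u (k + N) (x:ℂ)‖ ≤ (1/4) * (1/2)^N * (1/2)^k := by
      intro k
      have hxk : |x| ≤ ((k + N : ℕ):ℝ) + 1 := by
        push_cast
        linarith [Nat.cast_nonneg (α := ℝ) k]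
      calc ‖u (k + N) ↑x‖ ≤ (1/4) * (1/2)^(k + N) := hureal (k + N) x hxk
        _ = (1/4) * (1/2)^N * (1/2)^k := by rw [pow_add]; ring
    have hgsum : Summable (fun k => (1/4) * (1/2)^N * (1/2:ℝ)^k) :=
      (summable_geometric_of_lt_one (by norm_num) (by norm_num)).mul_left _
    calc ‖∑' k, u (k + N) ↑x‖ ≤ ∑' k, ((1/4) * (1/2)^N * (1/2:ℝ)^k) :=
          tsum_of_norm_bounded hgsum.hasSum hterm
      _ = (1/4) * (1/2)^N * 2 := by
          rw [tsum_mul_left, tsum_geometric_of_lt_one (by norm_num) (by norm_num)]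
          norm_num
      _ ≤ 1/2 := by
          have : ((1:ℝ)/2)^N ≤ 1 := pow_le_one₀ (by norm_num) (by norm_num)
          nlinarith
  rw [hkey]
  calc ‖((p N).eval (x:ℂ) - G x) + (∑ n ∈ range N, (u n ↑x - (d n).eval (x:ℂ)))
        + ∑' k, u (k + N) ↑x‖
      ≤ ‖((p N).eval (x:ℂ) - G x) + (∑ n ∈ range N, (u n ↑x - (d n).eval (x:ℂ)))‖
        + ‖∑' k, u (k + N) ↑x‖ := norm_add_le _ _
    _ ≤ (‖(p N).eval (x:ℂ) - G x‖ + ‖∑ n ∈ range N, (u n ↑x - (d n).eval (x:ℂ))‖)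
        + ‖∑' k, u (k + N) ↑x‖ := by
        apply add_le_add_left (norm_add_le _ _)
    _ ≤ ((1/8) * (1/2)^N + 1/4) + 1/2 := by
        apply add_le_add (add_le_add hb1 hb2) hb3
    _ < 1 := by
        have : ((1:ℝ)/2)^N ≤ 1 := pow_le_one₀ (by norm_num) (by norm_num)
        nlinarith

theorem carleman_approximation (g : ℝ → ℂ) (hg : Continuous g)
    (ε : ℝ → ℝ) (hε : Continuous ε) (hεp : ∀ x, 0 < ε x) :
    ∃ f : ℂ → ℂ, Differentiable ℂ f ∧ ∀ x : ℝ, ‖f x - g x‖ < ε x := by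
  have hlog : Continuous fun x => Real.log (ε x) := hε.log fun x => (hεp x).ne'
  set G₁ : ℝ → ℂ := fun x => ((-Real.log (ε x) + 2 : ℝ) : ℂ) with hG₁
  obtain ⟨F₁, hF₁d, hF₁⟩ := approx_const G₁ (by
    exact Complex.continuous_ofReal.comp ((hlog.neg).add continuous_const))
  set G₂ : ℝ → ℂ := fun x => g x * Complex.exp (F₁ x) with hG₂
  obtain ⟨F₂, hF₂d, hF₂⟩ := approx_const G₂ (by
    exact hg.mul (Complex.continuous_exp.comp (hF₁d.continuous.comp Complex.continuous_ofReal)))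
  refine ⟨fun z => F₂ z * Complex.exp (-F₁ z), by
    exact hF₂d.mul (Complex.differentiable_exp.comp hF₁d.neg), fun x => ?_⟩
  have hre : -(F₁ x).re < Real.log (ε x) - 1 := by
    have h := hF₁ x
    have h2 : |(F₁ ↑x - G₁ x).re| ≤ ‖F₁ ↑x - G₁ x‖ := Complex.abs_re_le_norm _
    rw [hG₁] at h2
    simp only [Complex.sub_re, Complex.ofReal_re] at h2
    have := lt_of_le_of_lt h2 (hF₁ x)
    rcases abs_lt.mp this with ⟨h3, h4⟩
    linarith
  have heq : F₂ ↑x * Complex.exp (-F₁ ↑x) - g x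
      = (F₂ ↑x - G₂ x) * Complex.exp (-F₁ ↑x) := by
    rw [hG₂]
    rw [sub_mul, mul_assoc, ← Complex.exp_add]
    simp
  rw [heq, norm_mul]
  calc ‖F₂ ↑x - G₂ x‖ * ‖Complex.exp (-F₁ ↑x)‖
      < 1 * ‖Complex.exp (-F₁ ↑x)‖ := by
        apply mul_lt_mul_of_pos_right (hF₂ x)
        rw [Complex.norm_exp]
        exact Real.exp_pos _
    _ = Real.exp (-(F₁ ↑x).re) := by
        rw [one_mul, Complex.norm_exp, Complex.neg_re]
    _ < Real.exp (Real.log (ε x) - 1) := Real.exp_lt_exp.mpr hre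
    _ < ε x := by
        rw [Real.exp_sub, Real.exp_log (hεp x)]
        rw [div_lt_iff₀ (Real.exp_pos _)]
        nlinarith [Real.exp_one_gt_d9, hεp x]
end
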